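/- The solvable Leibniz superalgebra SLP^{n,m} with even basis x_1,...,x_n,t_1,t_2,t_3, odd basis y_1,...,y_m and nonzero products [x_i,x_1]=x_{i+1} (2≤i≤n-1), [y_j,x_1]=y_{j+1} (1≤j≤m-1), [t_1,x_1]=-x_1, [x_1,t_1]=x_1, [x_i,t_1]=(i-2)x_i (3≤i≤n), [y_j,t_1]=(j-1)y_j (2≤j≤m), [x_i,t_2]=x_i (2≤i≤n), [y_j,t_3]=y_j (1≤j≤m) (all other products zero), satisfies the super Leibniz identity. -/
import Mathlib


namespace SolvableFiliformLeibniz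

/-- Index type of `SLP^{n,m}`: `x`-indices, then `t`-indices, then `y`-indices. -/
abbrev Idx (n m : ℕ) := Fin n ⊕ (Fin 3 ⊕ Fin m)

/-- Underlying vector space over ℂ. -/
abbrev V (n m : ℕ) := Idx n m →₀ ℂ

/-- `X n m k` is the basis vector `x_k` (1-based), or `0` if out of range. -/
noncomputable def X (n m k : ℕ) : V n m :=
  if h : 1 ≤ k ∧ k ≤ n then Finsupp.single (Sum.inl ⟨k - 1, by omega⟩) 1 else 0

/-- `T n m s` is the basis vector `t_s` (`s ∈ {1,2,3}`), or `0` if out of range. -/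
noncomputable def T (n m s : ℕ) : V n m :=
  if h : 1 ≤ s ∧ s ≤ 3 then Finsupp.single (Sum.inr (Sum.inl ⟨s - 1, by omega⟩)) 1 else 0

/-- `Y n m k` is the basis vector `y_k` (1-based), or `0` if out of range. -/
noncomputable def Y (n m k : ℕ) : V n m :=
  if h : 1 ≤ k ∧ k ≤ m then Finsupp.single (Sum.inr (Sum.inr ⟨k - 1, by omega⟩)) 1 else 0

/-- Structure constants of `SLP^{n,m}`:
`[x_i,x_1]=x_{i+1}` (2 ≤ i ≤ n-1), `[y_j,x_1]=y_{j+1}` (1 ≤ j ≤ m-1), `[t_1,x_1]=-x_1`,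
`[x_1,t_1]=x_1`, `[x_i,t_1]=(i-2)x_i` (3 ≤ i ≤ n), `[y_j,t_1]=(j-1)y_j` (2 ≤ j ≤ m),
`[x_i,t_2]=x_i` (2 ≤ i ≤ n), `[y_j,t_3]=y_j` (1 ≤ j ≤ m); all other products zero. -/
noncomputable def c (n m : ℕ) : Idx n m → Idx n m → V n m
  | Sum.inl i, Sum.inl j => if j.val = 0 ∧ 1 ≤ i.val then X n m (i.val + 2) else 0
  | Sum.inr (Sum.inr j), Sum.inl i => if i.val = 0 then Y n m (j.val + 2) else 0
  | Sum.inr (Sum.inl s), Sum.inl i =>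
      if s.val = 0 ∧ i.val = 0 then -X n m 1 else 0
  | Sum.inl i, Sum.inr (Sum.inl s) =>
      if s.val = 0 then
        (if i.val = 0 then X n m 1 else ((i.val - 1 : ℕ) : ℂ) • X n m (i.val + 1))
      else if s.val = 1 ∧ 1 ≤ i.val then X n m (i.val + 1) else 0
  | Sum.inr (Sum.inr j), Sum.inr (Sum.inl s) =>
      if s.val = 0 then ((j.val : ℕ) : ℂ) • Y n m (j.val + 1)
      else if s.val = 2 then Y n m (j.val + 1) else 0
  | _, _ => 0

/-- The product of `SLP^{n,m}`, as a bilinear map. -/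
noncomputable def br (n m : ℕ) (u v : V n m) : V n m :=
  Finsupp.lsum ℂ (fun a =>
    LinearMap.toSpanSingleton ℂ (V n m →ₗ[ℂ] V n m)
      (Finsupp.lsum ℂ (fun b => LinearMap.toSpanSingleton ℂ (V n m) (c n m a b)))) u v

/-- Parity of the basis indices (`x`'s and `t`'s even, `y`'s odd). -/
def par (n m : ℕ) : Idx n m → ZMod 2 :=
  Sum.elim (fun _ => 0) (Sum.elim (fun _ => 0) (fun _ => 1))

/-- `u` is homogeneous of degree `s`. -/
def IsHomog (n m : ℕ) (u : V n m) (s : ZMod 2) : Prop :=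
  ∀ a ∈ u.support, par n m a = s

variable {n m : ℕ}

lemma br_single_single (a b : Idx n m) (x y : ℂ) :
    br n m (Finsupp.single a x) (Finsupp.single b y) = (x*y) • c n m a b := by
  simp [br, Finsupp.lsum_single, LinearMap.toSpanSingleton_apply, smul_smul, mul_comm]

lemma br_smul_left (s : ℂ) (u v : V n m) : br n m (s • u) v = s • br n m u v := by
  simp [br, map_smul]

lemma br_smul_right (s : ℂ) (u v : V n m) : br n m u (s • v) = s • br n m u v := by
  simp [br, map_smul]

lemma br_add_left (u u' v : V n m) : br n m (u + u') v = br n m u v + br n m u' v := by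
  simp [br, map_add]

lemma br_add_right (u v v' : V n m) : br n m u (v + v') = br n m u v + br n m u v' := by
  simp [br, map_add]

lemma br_zero_left (v : V n m) : br n m 0 v = 0 := by simp [br]
lemma br_zero_right (u : V n m) : br n m u 0 = 0 := by simp [br]
lemma br_neg_right (u v : V n m) : br n m u (-v) = - br n m u v := by
  rw [← neg_one_smul ℂ v, br_smul_right]; simp
lemma br_neg_left (u v : V n m) : br n m (-u) v = - br n m u v := by
  simp [br, map_neg]

lemma br_sum_left {ι : Type*} (s : Finset ι) (f : ι → V n m) (v : V n m) :
    br n m (∑ i ∈ s, f i) v = ∑ i ∈ s, br n m (f i) v := by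
  simp [br, map_sum]

lemma br_sum_right {ι : Type*} (s : Finset ι) (u : V n m) (f : ι → V n m) :
    br n m u (∑ i ∈ s, f i) = ∑ i ∈ s, br n m u (f i) := by
  simp [br, map_sum]


lemma c_y_right (q : Idx n m) (j : Fin m) : c n m q (Sum.inr (Sum.inr j)) = 0 := by
  rcases q with i | (s | j') <;> rfl

lemma br_ysingle_right (u : V n m) (j : Fin m) (t : ℂ) :
    br n m u (Finsupp.single (Sum.inr (Sum.inr j)) t) = 0 := by
  simp [br, c_y_right]

lemma br_Y_right (u : V n m) (k : ℕ) : br n m u (Y n m k) = 0 := by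
  rw [Y]; split
  · exact br_ysingle_right u _ 1
  · exact br_zero_right u

lemma par_x (i : Fin n) : par n m (Sum.inl i) = 0 := rfl
lemma par_t (s : Fin 3) : par n m (Sum.inr (Sum.inl s)) = 0 := rfl
lemma par_y (j : Fin m) : par n m (Sum.inr (Sum.inr j)) = 1 := rfl

lemma br_sub_left (u u' v : V n m) : br n m (u - u') v = br n m u v - br n m u' v := by
  simp [br, map_sub]

lemma br_sub_right (u v v' : V n m) : br n m u (v - v') = br n m u v - br n m u v' := by
  simp [br, map_sub]

set_option maxHeartbeats 3200000 in
lemma key (a b d : Idx n m) :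
    br n m (Finsupp.single a 1) (c n m b d) =
      br n m (c n m a b) (Finsupp.single d 1) -
        ((-1 : ℂ) ^ ((par n m b * par n m d).val)) • br n m (c n m a d) (Finsupp.single b 1) := by
  rcases a with i | s | j <;> rcases b with i' | s' | j' <;> rcases d with i'' | s'' | j'' <;>
    simp only [par, Sum.elim_inl, Sum.elim_inr, zero_mul, mul_zero, mul_one, one_mul,
      ZMod.val_zero, pow_zero, one_smul] <;>
    simp only [c] <;>
    (try split_ifs) <;>
    simp_all [X, Y, c, br_single_single, br_zero_left, br_zero_right, br_smul_left, br_smul_right,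
      br_neg_left, br_neg_right, br_sub_left, br_sub_right, br_ysingle_right, br_Y_right,
      c_y_right, smul_smul, sub_sub_cancel, Finsupp.single_eq_zero] <;>
    (try split_ifs) <;>
    (try simp_all [X, Y, c, br_single_single, br_zero_left, br_zero_right, br_smul_left,
      br_smul_right, br_neg_left, br_neg_right, br_sub_left, br_sub_right, br_ysingle_right,
      br_Y_right, c_y_right, smul_smul, sub_sub_cancel, Finsupp.single_eq_zero]) <;>
    (try split_ifs) <;>
    (try simp_all [X, Y, c, br_single_single, br_zero_left, br_zero_right, br_smul_left,
      br_smul_right, br_neg_left, br_neg_right, br_sub_left, br_sub_right, br_ysingle_right,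
      br_Y_right, c_y_right, smul_smul, sub_sub_cancel, Finsupp.single_eq_zero]) <;>
    try omega


lemma key2 (a b d : Idx n m) (xa yb zd : ℂ) (sy sz : ZMod 2)
    (hb : par n m b = sy) (hd : par n m d = sz) :
    br n m (Finsupp.single a xa) (br n m (Finsupp.single b yb) (Finsupp.single d zd)) =
      br n m (br n m (Finsupp.single a xa) (Finsupp.single b yb)) (Finsupp.single d zd) -
        ((-1 : ℂ) ^ ((sy * sz).val)) •
          br n m (br n m (Finsupp.single a xa) (Finsupp.single d zd)) (Finsupp.single b yb) := by
  subst hb hd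
  have h1 : (Finsupp.single a xa : V n m) = xa • Finsupp.single a 1 := by
    simp [Finsupp.smul_single]
  have h2 : (Finsupp.single b yb : V n m) = yb • Finsupp.single b 1 := by
    simp [Finsupp.smul_single]
  have h3 : (Finsupp.single d zd : V n m) = zd • Finsupp.single d 1 := by
    simp [Finsupp.smul_single]
  rw [h1, h2, h3]
  simp only [br_smul_left, br_smul_right, br_single_single, one_mul, mul_one, smul_smul]
  rw [key a b d]
  simp only [smul_sub, smul_smul]
  ring_nf


/-- The solvable Leibniz superalgebra `SLP^{n,m}` satisfies the super Leibniz identity. -/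
theorem SLP_isLeibnizSuperalgebra (n m : ℕ) :
    ∀ (x y z : V n m) (sy sz : ZMod 2), IsHomog n m y sy → IsHomog n m z sz →
      br n m x (br n m y z) =
        br n m (br n m x y) z - ((-1 : ℂ) ^ (sy * sz).val) • br n m (br n m x z) y := by
  intro x y z sy sz hy hz
  have hx : x = ∑ a ∈ x.support, Finsupp.single a (x a) := (Finsupp.sum_single x).symm
  have hy' : y = ∑ b ∈ y.support, Finsupp.single b (y b) := (Finsupp.sum_single y).symm
  have hz' : z = ∑ d ∈ z.support, Finsupp.single d (z d) := (Finsupp.sum_single z).symm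
  rw [hx, hy', hz']
  simp only [br_sum_left, br_sum_right, Finset.smul_sum]
  have hswap : ∑ b ∈ y.support, ∑ d ∈ z.support, ∑ a ∈ x.support,
      ((-1 : ℂ) ^ (sy * sz).val) •
        br n m (br n m (Finsupp.single a (x a)) (Finsupp.single d (z d))) (Finsupp.single b (y b))
      = ∑ d ∈ z.support, ∑ b ∈ y.support, ∑ a ∈ x.support,
      ((-1 : ℂ) ^ (sy * sz).val) •
        br n m (br n m (Finsupp.single a (x a)) (Finsupp.single d (z d)))
          (Finsupp.single b (y b)) := Finset.sum_comm
  rw [hswap]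
  simp only [← Finset.sum_sub_distrib]
  refine Finset.sum_congr rfl (fun d hd => Finset.sum_congr rfl (fun b hb =>
    Finset.sum_congr rfl (fun a _ => ?_)))
  exact key2 a b d (x a) (y b) (z d) sy sz (hy b hb) (hz d hd)


end SolvableFiliformLeibniz
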